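/- Let ℓ ∈ ℤ_{≥0} ∪ {∞}. The family {F_{k,v} : k > 0, v ∈ J_ℓ} ∪ {F_{0,v} : v ∈ J_1 ∪ ⋯ ∪ J_ℓ} is a 1-dimensional continued fraction system (each member is hyperbolic and the preimages F_{k,v}^{-1}(D_1') form a partition of D_1'), and the transformation on D_1' associated with this system is T_ℓ. (For ℓ = 0 the second family is empty; for ℓ = ∞ the first family is empty and J_1 ∪ ⋯ ∪ J_ℓ means ∪_{k≥1} J_k.) -/

import Mathlib

open MeasureTheory Filter Topology
open scoped Classical

noncomputable section

namespace PadicCF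

variable (p : ℕ) [Fact p.Prime]

/-- `pℤ_p`, the maximal ideal of the `p`-adic integers, viewed inside `ℚ_p`. -/
def pZ : Set ℚ_[p] := {x | ‖x‖ ≤ (p : ℝ)⁻¹}

/-- `D_m`: tuples `(x_1, …, x_m)` such that `1, x_1, …, x_m` are linearly
independent over `ℤ`. -/
def Dm (m : ℕ) : Set (Fin m → ℚ_[p]) :=
  {x | ∀ (c : ℤ) (a : Fin m → ℤ), (c : ℚ_[p]) + ∑ j, (a j : ℚ_[p]) * x j = 0 →
    c = 0 ∧ ∀ j, a j = 0}

/-- `D_m' = D_m ∩ (pℤ_p)^m`. -/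
def Dm' (m : ℕ) : Set (Fin m → ℚ_[p]) := {x | x ∈ Dm p m ∧ ∀ j, x j ∈ pZ p}

variable {m : ℕ}

/-- The `m`-dimensional linear fractional transformation with parameter `(i, σ, pv, qv)`. -/
def LFT (i : Fin m) (σ : Equiv.Perm (Fin m)) (pv qv : Fin m → ℚ)
    (x : Fin m → ℚ_[p]) : Fin m → ℚ_[p] := fun k =>
  if k = σ⁻¹ i then (pv k : ℚ_[p]) / x i - (qv k : ℚ_[p])
  else (pv k : ℚ_[p]) * x (σ k) / x i - (qv k : ℚ_[p])

/-- The inverse of the LFT with parameter `(i, σ, pv, qv)`, given by the explicit formulas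
`x_i = p_s/(y_s + q_s)` and `x_k = p_s (y_t + q_t) / (p_t (y_s + q_s))` for `k ≠ i`,
where `s = σ⁻¹ i`, `t = σ⁻¹ k`. -/
def LFTinv (i : Fin m) (σ : Equiv.Perm (Fin m)) (pv qv : Fin m → ℚ)
    (y : Fin m → ℚ_[p]) : Fin m → ℚ_[p] := fun k =>
  if k = i then (pv (σ⁻¹ i) : ℚ_[p]) / (y (σ⁻¹ i) + (qv (σ⁻¹ i) : ℚ_[p]))
  else (pv (σ⁻¹ i) : ℚ_[p]) * (y (σ⁻¹ k) + (qv (σ⁻¹ k) : ℚ_[p])) /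
        ((pv (σ⁻¹ k) : ℚ_[p]) * (y (σ⁻¹ i) + (qv (σ⁻¹ i) : ℚ_[p])))

/-- Hyperbolicity of an LFT, Definition 2.6 of the paper.  Here `ord` is `padicValRat p`;
the case `q_k = 0` (where `ord q_k = ∞` by convention) is listed explicitly in (iv). -/
def Hyperbolic (i : Fin m) (σ : Equiv.Perm (Fin m)) (pv qv : Fin m → ℚ) : Prop :=
  (∀ k, pv k ≠ 0 ∧ 0 ≤ padicValRat p (pv k)) ∧
  (qv (σ⁻¹ i) ≠ 0 ∧ padicValRat p (qv (σ⁻¹ i)) ≤ 0 ∧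
    0 < padicValRat p (pv (σ⁻¹ i) / qv (σ⁻¹ i))) ∧
  (∀ k, k ≠ σ⁻¹ i → qv k ≠ 0 → padicValRat p (qv k) ≤ 0 →
    padicValRat p (pv k / qv k) < padicValRat p (pv (σ⁻¹ i) / qv (σ⁻¹ i))) ∧
  (∀ k, k ≠ σ⁻¹ i → (qv k = 0 ∨ 0 < padicValRat p (qv k)) →
    padicValRat p (pv k) < padicValRat p (pv (σ⁻¹ i) / qv (σ⁻¹ i)))

/-- `F⁻¹(D_m')`, i.e. the image of `D_m'` under the (formula-defined) inverse of the LFT. -/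
def invImg (i : Fin m) (σ : Equiv.Perm (Fin m)) (pv qv : Fin m → ℚ) :
    Set (Fin m → ℚ_[p]) := LFTinv p i σ pv qv '' Dm' p m

/-- A family of hyperbolic LFTs indexed by `Λ` is an `m`-dimensional continued fraction
system if the sets `F_λ⁻¹(D_m')` form a partition of `D_m'`. -/
def IsCFSystem (m : ℕ) {Λ : Type*} (iF : Λ → Fin m) (σF : Λ → Equiv.Perm (Fin m))
    (pF qF : Λ → Fin m → ℚ) : Prop :=
  (∀ l, Hyperbolic p (iF l) (σF l) (pF l) (qF l)) ∧
  (⋃ l, invImg p (iF l) (σF l) (pF l) (qF l)) = Dm' p m ∧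
  (Pairwise fun l l' => Disjoint (invImg p (iF l) (σF l) (pF l) (qF l))
      (invImg p (iF l') (σF l') (pF l') (qF l')))

/-- The sup-norm `|z|_p = max_j |z_j|_p` on `ℚ_p^m`. -/
def supNorm (z : Fin m → ℚ_[p]) : NNReal := Finset.univ.sup fun j => ‖z j‖₊

/-- `v ∈ ℚ` is the integral part of `α ∈ ℚ_p` if it is of the form
`∑_{n=0}^{N} d_n p^{-n}` with digits `d_n ∈ {0, …, p-1}` and `α - v ∈ pℤ_p`. -/
def IsIntegralPart (α : ℚ_[p]) (v : ℚ) : Prop :=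
  (∃ N : ℕ, ∃ d : ℕ → ℕ, (∀ n, d n < p) ∧
      v = ∑ n ∈ Finset.range (N + 1), (d n : ℚ) / (p : ℚ) ^ n) ∧
  ‖α - (v : ℚ_[p])‖ ≤ (p : ℝ)⁻¹

/-- The integral part `⌊α⌋_p ∈ ℚ` of a `p`-adic number. -/
def padicFloor (α : ℚ_[p]) : ℚ :=
  if h : ∃ v : ℚ, IsIntegralPart p α v then h.choose else 0

/-- `J_N`: rationals `∑_{n=0}^{N} c_n p^{-n}` with digits `c_n ∈ {0,…,p-1}` and `c_N ≠ 0`. -/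
def Jset (N : ℕ) : Set ℚ :=
  {v | ∃ c : ℕ → ℕ, (∀ n, c n < p) ∧ c N ≠ 0 ∧
      v = ∑ n ∈ Finset.range (N + 1), (c n : ℚ) / (p : ℚ) ^ n}

/-- The exponent `k = max(ord_p x - ℓ, 0)`, with `k = 0` when `ℓ = ∞`. -/
def kexp (ℓ : ℕ∞) (x : ℚ_[p]) : ℤ :=
  if ℓ = ⊤ then 0 else max (x.valuation - ((WithTop.untopD 0 ℓ : ℕ) : ℤ)) 0

/-- The transformation `T_ℓ : pℤ_p → pℤ_p`, `T_ℓ(x) = p^k/x - ⌊p^k/x⌋_p` with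
`k = max(ord_p x - ℓ, 0)`, `T_ℓ(0) = 0`. -/
def Tell (ℓ : ℕ∞) (x : ℚ_[p]) : ℚ_[p] :=
  if x = 0 then 0
  else (p : ℚ_[p]) ^ kexp p ℓ x / x - (padicFloor p ((p : ℚ_[p]) ^ kexp p ℓ x / x) : ℚ_[p])

/-- The one-dimensional set `D_1' ⊆ pℤ_p` (elements of `pℤ_p` irrational over `ℤ`). -/
def D1 : Set ℚ_[p] :=
  {x | (∀ c a : ℤ, (c : ℚ_[p]) + (a : ℚ_[p]) * x = 0 → c = 0 ∧ a = 0) ∧ x ∈ pZ p}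

/-- Index set of the continued fraction system of `T_ℓ`:
pairs `(k, v)` with `k > 0, v ∈ J_ℓ`, or `k = 0` and `v ∈ J_1 ∪ ⋯ ∪ J_ℓ`. -/
def SysIndex (ℓ : ℕ∞) : Set (ℕ × ℚ) :=
  {kv | (0 < kv.1 ∧ ∃ n : ℕ, (n : ℕ∞) = ℓ ∧ kv.2 ∈ Jset p n) ∨
        (kv.1 = 0 ∧ ∃ n : ℕ, 1 ≤ n ∧ (n : ℕ∞) ≤ ℓ ∧ kv.2 ∈ Jset p n)}

/-- The exponent `r = max(-ℓ - ord_p(x_{k+1}) + ord_p(x_1), 0)` (`0` if `ℓ = ∞`). -/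
def rexp (ℓ : ℕ∞) (x1 xk : ℚ_[p]) : ℤ :=
  if ℓ = ⊤ then 0 else max (-((WithTop.untopD 0 ℓ : ℕ) : ℤ) - xk.valuation + x1.valuation) 0

/-- The multidimensional transformation `T_{ℓ,m}` on `D_m'`. -/
def Tellm (ℓ : ℕ∞) (x : Fin m → ℚ_[p]) : Fin m → ℚ_[p] := fun k =>
  if h : (k : ℕ) + 1 = m then Tell p ℓ (x ⟨0, k.pos⟩)
  else
    (p : ℚ_[p]) ^ rexp p ℓ (x ⟨0, k.pos⟩)
        (x ⟨(k : ℕ) + 1, lt_of_le_of_ne (Nat.succ_le_of_lt k.isLt) h⟩) *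
        x ⟨(k : ℕ) + 1, lt_of_le_of_ne (Nat.succ_le_of_lt k.isLt) h⟩ / x ⟨0, k.pos⟩ -
      (padicFloor p
        ((p : ℚ_[p]) ^ rexp p ℓ (x ⟨0, k.pos⟩)
            (x ⟨(k : ℕ) + 1, lt_of_le_of_ne (Nat.succ_le_of_lt k.isLt) h⟩) *
          x ⟨(k : ℕ) + 1, lt_of_le_of_ne (Nat.succ_le_of_lt k.isLt) h⟩ / x ⟨0, k.pos⟩) : ℚ_[p])

/-- The vector of powers `p⃗^{(ℓ,x)}` of Definition 3.13. -/
def pParam (ℓ : ℕ∞) (x : Fin m → ℚ_[p]) (k : Fin m) : ℚ :=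
  if ℓ = ⊤ then 1
  else if h : (k : ℕ) + 1 = m then
    (p : ℚ) ^ max (-((WithTop.untopD 0 ℓ : ℕ) : ℤ) + (x ⟨0, k.pos⟩).valuation) 0
  else
    (p : ℚ) ^ max (-((WithTop.untopD 0 ℓ : ℕ) : ℤ) -
      (x ⟨(k : ℕ) + 1, lt_of_le_of_ne (Nat.succ_le_of_lt k.isLt) h⟩).valuation +
      (x ⟨0, k.pos⟩).valuation) 0

/-- The vector `q⃗^{(ℓ,x)}` of Definition 3.13. -/
def qParam (ℓ : ℕ∞) (x : Fin m → ℚ_[p]) (k : Fin m) : ℚ :=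
  if h : (k : ℕ) + 1 = m then padicFloor p ((pParam p ℓ x k : ℚ_[p]) / x ⟨0, k.pos⟩)
  else padicFloor p ((pParam p ℓ x k : ℚ_[p]) *
    x ⟨(k : ℕ) + 1, lt_of_le_of_ne (Nat.succ_le_of_lt k.isLt) h⟩ / x ⟨0, k.pos⟩)

/-- The `j`-th convergent `π(α; j) = F⁻¹_{ψ_0} ∘ ⋯ ∘ F⁻¹_{ψ_j} (0̄)`. -/
def convergent (Finv : ℕ → (Fin m → ℚ_[p]) → Fin m → ℚ_[p]) (j : ℕ) : Fin m → ℚ_[p] :=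
  (List.range (j + 1)).foldr (fun t acc => Finv t acc) 0

/-- The exponent `h = max_k (ord_p(p_s) - ord_p(p_k))` of Section 5. -/
def hVal (i : Fin m) (σ : Equiv.Perm (Fin m)) (pv : Fin m → ℚ) : ℤ :=
  Finset.univ.sup' ⟨i, Finset.mem_univ i⟩
    fun k => padicValRat p (pv (σ⁻¹ i)) - padicValRat p (pv k)

/-- The cylinders `V_k^{(y)}` of Section 5. -/
def Vset (i : Fin m) (σ : Equiv.Perm (Fin m)) (pv qv : Fin m → ℚ) (n : ℕ)
    (a : Fin m → ℚ_[p]) (y : ℕ) (k : Fin m) : Set ℚ_[p] :=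
  if k = i then
    {t | ∃ w : ℚ_[p], ‖w‖ ≤ (p : ℝ) ^ (-(hVal p i σ pv)) ∧
      t = (pv (σ⁻¹ i) : ℚ_[p]) / (a (σ⁻¹ i) + (qv (σ⁻¹ i) : ℚ_[p])) +
        (p : ℚ_[p]) ^ ((n : ℤ) + padicValRat p (pv (σ⁻¹ i)) -
          2 * padicValRat p (qv (σ⁻¹ i))) * ((y : ℚ_[p]) + w)}
  else
    {t | ∃ w : ℚ_[p], ‖w‖ ≤ (p : ℝ) ^ (-(n : ℤ)) ∧
      t = ((pv (σ⁻¹ i) : ℚ_[p]) / (a (σ⁻¹ i) + (qv (σ⁻¹ i) : ℚ_[p])) +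
        (p : ℚ_[p]) ^ ((n : ℤ) + padicValRat p (pv (σ⁻¹ i)) -
          2 * padicValRat p (qv (σ⁻¹ i))) * (y : ℚ_[p])) *
        (a (σ⁻¹ k) + (qv (σ⁻¹ k) : ℚ_[p])) / (pv (σ⁻¹ k) : ℚ_[p])}


section Helpers

open Finset

variable {p : ℕ} [Fact p.Prime]

/-- Irrationality of a single p-adic number. -/
def Irr (p : ℕ) [Fact p.Prime] (x : ℚ_[p]) : Prop :=
  ∀ c a : ℤ, (c : ℚ_[p]) + (a : ℚ_[p]) * x = 0 → c = 0 ∧ a = 0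

lemma hp_prime : p.Prime := Fact.out
lemma hp_one_lt_real : (1:ℝ) < p := by exact_mod_cast hp_prime.one_lt
lemma hp_pos_real : (0:ℝ) < p := lt_trans one_pos hp_one_lt_real
lemma hp_ne_zero : p ≠ 0 := hp_prime.ne_zero
lemma hp_ne_zero_q : (p:ℚ) ≠ 0 := Nat.cast_ne_zero.2 hp_ne_zero
lemma hp_ne_zero_qp : (p:ℚ_[p]) ≠ 0 := Nat.cast_ne_zero.2 hp_ne_zero

lemma Irr.ne_zero {x : ℚ_[p]} (h : Irr p x) : x ≠ 0 := by
  intro h0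
  obtain ⟨-, ha⟩ := h 0 1 (by simp [h0])
  exact one_ne_zero ha

lemma rat_cast_mul_den (v : ℚ) : ((v:ℚ_[p]) * (v.den : ℚ_[p])) = ((v.num : ℤ) : ℚ_[p]) := by
  exact_mod_cast congrArg (fun t : ℚ => (t : ℚ_[p])) (Rat.mul_den_eq_num v)

lemma Irr.add_rat {x : ℚ_[p]} (h : Irr p x) (v : ℚ) : Irr p (x + (v:ℚ_[p])) := by
  intro c a hca
  have hden : (v.den : ℤ) ≠ 0 := by exact_mod_cast v.den_nz
  have key := rat_cast_mul_den (p := p) v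
  have h2 : ((c * v.den + a * v.num : ℤ) : ℚ_[p]) + ((a * v.den : ℤ) : ℚ_[p]) * x = 0 := by
    push_cast
    push_cast at key
    linear_combination (v.den : ℚ_[p]) * hca - (a : ℚ_[p]) * key
  obtain ⟨h3, h4⟩ := h _ _ h2
  have ha : a = 0 := by
    rcases mul_eq_zero.1 h4 with h | h
    · exact h
    · exact absurd h hden
  subst ha
  simp only [zero_mul, mul_zero, add_zero] at h3
  exact ⟨by rcases mul_eq_zero.1 h3 with h | h; exact h; exact absurd h hden, rfl⟩

lemma Irr.sub_rat {x : ℚ_[p]} (h : Irr p x) (v : ℚ) : Irr p (x - (v:ℚ_[p])) := by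
  have := h.add_rat (-v)
  simpa [sub_eq_add_neg] using this

lemma Irr.rat_div {x : ℚ_[p]} (h : Irr p x) (q : ℚ) (hq : q ≠ 0) : Irr p ((q:ℚ_[p]) / x) := by
  intro c a hca
  have hx : x ≠ 0 := h.ne_zero
  have hnum : (q.num : ℤ) ≠ 0 := Rat.num_ne_zero.2 hq
  have hden : (q.den : ℤ) ≠ 0 := by exact_mod_cast q.den_nz
  have key := rat_cast_mul_den (p := p) q
  have h2 : ((a * q.num : ℤ) : ℚ_[p]) + ((c * q.den : ℤ) : ℚ_[p]) * x = 0 := by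
    push_cast
    push_cast at key
    have hca' : (c:ℚ_[p]) * x + (a:ℚ_[p]) * (q:ℚ_[p]) = 0 := by
      have := congrArg (· * x) hca
      simp only [add_mul, zero_mul] at this
      rw [mul_assoc, div_mul_cancel₀ _ hx] at this
      exact this
    linear_combination (q.den : ℚ_[p]) * hca' - (a : ℚ_[p]) * key
  obtain ⟨h3, h4⟩ := h _ _ h2
  constructor
  · rcases mul_eq_zero.1 h4 with h | h; exact h; exact absurd h hden
  · rcases mul_eq_zero.1 h3 with h | h; exact h; exact absurd h hnum

lemma mem_Dm'_one {x : Fin 1 → ℚ_[p]} :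
    x ∈ Dm' p 1 ↔ Irr p (x 0) ∧ ‖x 0‖ ≤ (p : ℝ)⁻¹ := by
  constructor
  · rintro ⟨h1, h2⟩
    refine ⟨fun c a hca => ?_, h2 0⟩
    obtain ⟨hc, ha⟩ := h1 c (fun _ => a) (by simpa using hca)
    exact ⟨hc, ha 0⟩
  · rintro ⟨h1, h2⟩
    refine ⟨fun c a hca => ?_, fun j => by rw [Subsingleton.elim j 0]; exact h2⟩
    obtain ⟨hc, ha⟩ := h1 c (a 0) (by simpa using hca)
    exact ⟨hc, fun j => by rw [Subsingleton.elim j 0]; exact ha⟩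

/-- per-term manipulation -/
lemma term_div_pow {a i n : ℕ} (hi : i ≤ n) :
    ((a * p ^ (n - i) : ℕ) : ℚ) / (p:ℚ) ^ n = (a : ℚ) / (p:ℚ) ^ i := by
  rw [div_eq_div_iff (pow_ne_zero n hp_ne_zero_q) (pow_ne_zero i hp_ne_zero_q)]
  push_cast
  rw [mul_assoc, ← pow_add, Nat.sub_add_cancel hi]

lemma Jset_spec {n : ℕ} {v : ℚ} (hv : v ∈ Jset p n) :
    ∃ M : ℕ, ¬ (p ∣ M) ∧ v = (M : ℚ) / (p:ℚ) ^ n := by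
  obtain ⟨c, hc, hcn, rfl⟩ := hv
  refine ⟨∑ i ∈ range (n+1), c i * p ^ (n - i), ?_, ?_⟩
  · rw [Finset.sum_range_succ]
    simp only [Nat.sub_self, pow_zero, mul_one]
    rw [Nat.dvd_add_right (Finset.dvd_sum fun i hi => Dvd.dvd.mul_left
      (dvd_pow_self p (by simp at hi; omega : n - i ≠ 0)) _)]
    exact fun h => hcn (Nat.eq_zero_of_dvd_of_lt h (hc n))
  · rw [Nat.cast_sum, Finset.sum_div]
    refine Finset.sum_congr rfl fun i hi => ?_
    rw [term_div_pow (by simp at hi; omega)]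

lemma Jset_ne_zero {n : ℕ} {v : ℚ} (hv : v ∈ Jset p n) : v ≠ 0 := by
  obtain ⟨M, hM, rfl⟩ := Jset_spec hv
  have hM0 : (M:ℚ) ≠ 0 := Nat.cast_ne_zero.2 fun h => hM (h ▸ dvd_zero p)
  exact div_ne_zero hM0 (pow_ne_zero _ hp_ne_zero_q)

lemma Jset_padicValRat {n : ℕ} {v : ℚ} (hv : v ∈ Jset p n) : padicValRat p v = -n := by
  obtain ⟨M, hM, rfl⟩ := Jset_spec hv
  have hM0 : (M:ℚ) ≠ 0 := Nat.cast_ne_zero.2 fun h => hM (h ▸ dvd_zero p)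
  rw [padicValRat.div hM0 (pow_ne_zero _ hp_ne_zero_q)]
  rw [padicValRat.of_nat, padicValNat.eq_zero_of_not_dvd hM]
  rw [show ((p:ℚ)^n) = ((p^n : ℕ) : ℚ) by push_cast; ring, padicValRat.of_nat,
    padicValNat.prime_pow]
  simp

lemma Jset_norm {n : ℕ} {v : ℚ} (hv : v ∈ Jset p n) :
    ‖((v:ℚ_[p]))‖ = (p:ℝ) ^ (n:ℤ) := by
  have h0 := Jset_ne_zero hv
  rw [Padic.eq_padicNorm, padicNorm.eq_zpow_of_nonzero h0, Jset_padicValRat hv]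
  push_cast
  ring_nf

end Helpers

section Helpers2

open Finset

variable {p : ℕ} [Fact p.Prime]

/-- The core digit-uniqueness lemma. -/
lemma digits_eq {N : ℕ} {d d' : ℕ → ℕ} (hd : ∀ i, d i < p) (hd' : ∀ i, d' i < p)
    (h : ‖(((∑ i ∈ range (N+1), (d i : ℚ) / (p:ℚ) ^ i)
        - ∑ i ∈ range (N+1), (d' i : ℚ) / (p:ℚ) ^ i : ℚ) : ℚ_[p])‖ ≤ (p:ℝ)⁻¹) :
    (∑ i ∈ range (N+1), (d i : ℚ) / (p:ℚ) ^ i)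
      = ∑ i ∈ range (N+1), (d' i : ℚ) / (p:ℚ) ^ i := by
  set v : ℚ := ∑ i ∈ range (N+1), (d i : ℚ) / (p:ℚ) ^ i with hv
  set v' : ℚ := ∑ i ∈ range (N+1), (d' i : ℚ) / (p:ℚ) ^ i with hv'
  set M : ℤ := ∑ i ∈ range (N+1), ((d i : ℤ) - (d' i : ℤ)) * (p:ℤ) ^ (N - i) with hM
  have key : v - v' = (M : ℚ) / (p:ℚ) ^ N := by
    rw [hv, hv', hM, ← Finset.sum_sub_distrib]
    push_cast
    rw [Finset.sum_div]
    refine Finset.sum_congr rfl fun i hi => ?_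
    have hi' : i ≤ N := by simp at hi; omega
    rw [sub_mul, sub_div]
    congr 1
    · rw [show ((d i : ℚ) * (p:ℚ) ^ (N - i)) = (((d i * p ^ (N-i) : ℕ) : ℚ)) by push_cast; ring,
        term_div_pow hi']
    · rw [show ((d' i : ℚ) * (p:ℚ) ^ (N - i)) = (((d' i * p ^ (N-i) : ℕ) : ℚ)) by push_cast; ring,
        term_div_pow hi']
  have hdvd : ((p:ℤ)) ^ (N+1) ∣ M := by
    rw [← Padic.norm_int_le_pow_iff_dvd]
    have hcast : ((M : ℤ) : ℚ_[p]) = (((v - v' : ℚ)) : ℚ_[p]) * (p:ℚ_[p]) ^ N := by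
      rw [key]; push_cast
      rw [div_mul_cancel₀]
      exact pow_ne_zero _ hp_ne_zero_qp
    rw [hcast, norm_mul, Padic.norm_p_pow]
    calc ‖(((v - v' : ℚ)) : ℚ_[p])‖ * (p:ℝ) ^ (-(N:ℤ))
        ≤ (p:ℝ)⁻¹ * (p:ℝ) ^ (-(N:ℤ)) := by
          apply mul_le_mul_of_nonneg_right h (zpow_nonneg (le_of_lt hp_pos_real) _)
      _ = (p:ℝ) ^ (-((N:ℤ)+1)) := by
          rw [← zpow_neg_one, ← zpow_add₀ (ne_of_gt hp_pos_real)]; ring_nf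
      _ = (p:ℝ) ^ (-((N+1 : ℕ) :ℤ)) := by push_cast; ring_nf
  have habs : |M| < (p:ℤ) ^ (N+1) := by
    calc |M| ≤ ∑ i ∈ range (N+1), |((d i : ℤ) - (d' i : ℤ)) * (p:ℤ) ^ (N - i)| :=
          Finset.abs_sum_le_sum_abs _ _
      _ ≤ ∑ i ∈ range (N+1), ((p:ℤ) - 1) * (p:ℤ) ^ (N - i) := by
          refine Finset.sum_le_sum fun i _ => ?_
          rw [abs_mul, abs_pow, abs_of_nonneg (by positivity : (0:ℤ) ≤ (p:ℤ))]
          apply mul_le_mul_of_nonneg_right _ (by positivity)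
          have h1 := hd i; have h2 := hd' i
          rw [abs_sub_le_iff]; omega
      _ = (∑ i ∈ range (N+1), (p:ℤ) ^ i) * ((p:ℤ) - 1) := by
          have hre := Finset.sum_range_reflect (fun i => ((p:ℤ) - 1) * (p:ℤ) ^ i) (N+1)
          simp only [Nat.add_sub_cancel] at hre
          rw [hre, Finset.sum_mul]
          exact Finset.sum_congr rfl fun i _ => by ring
      _ = (p:ℤ) ^ (N+1) - 1 := geom_sum_mul _ _
      _ < (p:ℤ) ^ (N+1) := by omega
  have hM0 : M = 0 := Int.eq_zero_of_abs_lt_dvd hdvd habs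
  have : v - v' = 0 := by rw [key, hM0]; simp
  linarith

lemma digits_pad {N K : ℕ} (h : N ≤ K) (d : ℕ → ℕ) :
    ∑ n ∈ range (N+1), (d n : ℚ) / (p:ℚ) ^ n
      = ∑ n ∈ range (K+1), (((if n ≤ N then d n else 0) : ℕ) : ℚ) / (p:ℚ) ^ n := by
  rw [← Finset.sum_subset (Finset.range_subset_range.2 (Nat.succ_le_succ h))
    (fun x _ hx => by rw [if_neg (by simp [Nat.lt_succ] at hx; omega)]; simp)]
  exact Finset.sum_congr rfl fun n hn => by rw [if_pos (by simp [Nat.lt_succ] at hn; omega)]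

lemma IsIntegralPart.unique {α : ℚ_[p]} {v w : ℚ}
    (hv : IsIntegralPart p α v) (hw : IsIntegralPart p α w) : v = w := by
  obtain ⟨⟨N, d, hd, hveq⟩, hv2⟩ := hv
  obtain ⟨⟨N', d', hd', hweq⟩, hw2⟩ := hw
  have hnorm : ‖(((v - w : ℚ)) : ℚ_[p])‖ ≤ (p:ℝ)⁻¹ := by
    have : (((v - w : ℚ)) : ℚ_[p]) = (α - (w:ℚ_[p])) - (α - (v:ℚ_[p])) := by push_cast; ring
    rw [this]
    calc ‖(α - (w:ℚ_[p])) - (α - (v:ℚ_[p]))‖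
        = ‖(α - (w:ℚ_[p])) + (-(α - (v:ℚ_[p])))‖ := by rw [sub_eq_add_neg]
      _ ≤ max ‖α - (w:ℚ_[p])‖ ‖-(α - (v:ℚ_[p]))‖ := Padic.nonarchimedean _ _
      _ ≤ (p:ℝ)⁻¹ := by rw [norm_neg]; exact max_le hw2 hv2
  set K := max N N' with hK
  rw [hveq, digits_pad (le_max_left N N') d] at hnorm ⊢
  rw [hweq, digits_pad (le_max_right N N') d'] at hnorm ⊢
  exact digits_eq
    (fun i => by by_cases hi : i ≤ N <;> simp [hi, hd i, hp_prime.pos])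
    (fun i => by by_cases hi : i ≤ N' <;> simp [hi, hd' i, hp_prime.pos]) hnorm

lemma padicFloor_eq {α : ℚ_[p]} {v : ℚ} (h : IsIntegralPart p α v) :
    padicFloor p α = v := by
  have hex : ∃ w : ℚ, IsIntegralPart p α w := ⟨v, h⟩
  rw [padicFloor, dif_pos hex]
  exact IsIntegralPart.unique hex.choose_spec h

lemma nat_digit_sum (M : ℕ) (m : ℕ) :
    ∑ j ∈ range m, (M / p ^ j % p) * p ^ j = M % p ^ m := by
  induction m with
  | zero => simp [Nat.mod_one]
  | succ m ih => rw [Finset.sum_range_succ, ih, Nat.mod_pow_succ, mul_comm]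

/-- construction of the integral part of an element of norm `p^n`. -/
lemma exists_intpart (α : ℚ_[p]) (n : ℕ) (hα : ‖α‖ = (p:ℝ) ^ (n:ℤ)) :
    ∃ v ∈ Jset p n, ‖α - ((v:ℚ_[p]))‖ ≤ (p:ℝ)⁻¹ := by
  have hppos := hp_pos_real (p := p)
  have hpne : (p:ℝ) ≠ 0 := ne_of_gt hppos
  set z : ℚ_[p] := α * (p:ℚ_[p]) ^ (n:ℤ) with hz
  have hznorm : ‖z‖ = 1 := by
    rw [hz, norm_mul, hα, Padic.norm_p_zpow, ← zpow_add₀ hpne]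
    simp
  set z' : ℤ_[p] := ⟨z, le_of_eq hznorm⟩ with hz'
  set M : ℕ := z'.appr (n+1) with hMdef
  have hMlt : M < p ^ (n+1) := PadicInt.appr_lt _ _
  have hspec : ‖z - ((M:ℕ) : ℚ_[p])‖ ≤ (p:ℝ) ^ (-((n+1 : ℕ):ℤ)) := by
    have h1 : z' - ((M:ℕ) : ℤ_[p]) ∈ Ideal.span {((p : ℤ_[p])) ^ (n+1)} :=
      PadicInt.appr_spec (n+1) z'
    have h2 := (PadicInt.norm_le_pow_iff_mem_span_pow (z' - ((M:ℕ) : ℤ_[p])) (n+1)).2 h1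
    have h3 : ((z' - ((M:ℕ) : ℤ_[p]) : ℤ_[p]) : ℚ_[p]) = z - ((M:ℕ) : ℚ_[p]) := by
      push_cast; rfl
    rw [PadicInt.norm_def, h3] at h2
    exact_mod_cast h2
  have hMnorm : ‖((M:ℕ) : ℚ_[p])‖ = 1 := by
    by_contra hne
    have hle : ‖((M:ℕ) : ℚ_[p])‖ ≤ 1 := by
      have := Padic.norm_int_le_one (p := p) (M : ℤ)
      simpa using this
    have hlt : ‖((M:ℕ) : ℚ_[p])‖ < 1 := lt_of_le_of_ne hle hne
    have : ‖z‖ < 1 := by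
      have hzM : z = (z - ((M:ℕ) : ℚ_[p])) + ((M:ℕ) : ℚ_[p]) := by ring
      rw [hzM]
      calc ‖(z - ((M:ℕ) : ℚ_[p])) + ((M:ℕ) : ℚ_[p])‖
          ≤ max ‖z - ((M:ℕ) : ℚ_[p])‖ ‖((M:ℕ) : ℚ_[p])‖ := Padic.nonarchimedean _ _
        _ < 1 := by
            apply max_lt _ hlt
            calc ‖z - ((M:ℕ) : ℚ_[p])‖ ≤ (p:ℝ) ^ (-((n+1 : ℕ):ℤ)) := hspec
              _ ≤ (p:ℝ) ^ (-(1:ℤ)) := zpow_le_zpow_right₀ (le_of_lt hp_one_lt_real) (by omega)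
              _ < 1 := by rw [zpow_neg_one]; exact inv_lt_one_of_one_lt₀ hp_one_lt_real
    rw [hznorm] at this; linarith
  have hpM : ¬ p ∣ M := by
    intro hdvd
    have : ‖((M : ℤ) : ℚ_[p])‖ < 1 := Padic.norm_intCast_lt_one_iff.2
      (Int.natCast_dvd_natCast.2 hdvd)
    rw [show ((M : ℤ) : ℚ_[p]) = ((M:ℕ) : ℚ_[p]) by push_cast; rfl, hMnorm] at this
    linarith
  refine ⟨(M : ℚ) / (p:ℚ) ^ n, ⟨fun i => M / p ^ (n - i) % p, fun i => Nat.mod_lt _ hp_prime.pos,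
    ?_, ?_⟩, ?_⟩
  · simp only [Nat.sub_self, pow_zero, Nat.div_one]
    intro h0
    exact hpM (Nat.dvd_of_mod_eq_zero h0)
  · have hsum : ∑ j ∈ range (n+1), (M / p ^ j % p) * p ^ j = M := by
      rw [nat_digit_sum, Nat.mod_eq_of_lt hMlt]
    have hrefl : ∑ i ∈ range (n+1), (M / p ^ (n - i) % p) * p ^ (n - i) = M := by
      have h := Finset.sum_range_reflect (fun j => (M / p ^ j % p) * p ^ j) (n+1)
      simp only [Nat.add_sub_cancel] at h
      rw [h, hsum]
    rw [show (M:ℚ) = ((∑ i ∈ range (n+1), (M / p ^ (n - i) % p) * p ^ (n - i) : ℕ) : ℚ) by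
      rw [hrefl], Nat.cast_sum, Finset.sum_div]
    refine Finset.sum_congr rfl fun i hi => ?_
    rw [term_div_pow (by simp at hi; omega)]
  · have hcast : α - (((M : ℚ) / (p:ℚ) ^ n : ℚ) : ℚ_[p])
        = (z - ((M:ℕ) : ℚ_[p])) * (p:ℚ_[p]) ^ (-(n:ℤ)) := by
      rw [hz]
      push_cast
      rw [sub_mul, mul_assoc, ← zpow_natCast (p:ℚ_[p]) n, ← zpow_add₀ hp_ne_zero_qp]
      simp [div_eq_mul_inv, zpow_neg]
    rw [hcast, norm_mul, Padic.norm_p_zpow, neg_neg]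
    calc ‖z - ((M:ℕ) : ℚ_[p])‖ * (p:ℝ) ^ ((n:ℤ))
        ≤ (p:ℝ) ^ (-((n+1 : ℕ):ℤ)) * (p:ℝ) ^ ((n:ℤ)) := by
          apply mul_le_mul_of_nonneg_right hspec (zpow_nonneg (le_of_lt hppos) _)
      _ = (p:ℝ)⁻¹ := by
          rw [← zpow_add₀ hpne, ← zpow_neg_one]
          congr 1
          push_cast
          ring

end Helpers2

section Helpers3

open Finset

variable {p : ℕ} [Fact p.Prime]

lemma LFTinv_one (k : ℕ) (v : ℚ) (y : Fin 1 → ℚ_[p]) :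
    LFTinv p (0 : Fin 1) 1 (fun _ => (p:ℚ) ^ k) (fun _ => v) y
      = fun _ => (p:ℚ_[p]) ^ k / (y 0 + (v:ℚ_[p])) := by
  funext j
  rw [Subsingleton.elim j 0]
  simp only [LFTinv, if_pos rfl]
  norm_num

lemma LFT_one (k : ℕ) (v : ℚ) (x : Fin 1 → ℚ_[p]) :
    LFT p (0 : Fin 1) 1 (fun _ => (p:ℚ) ^ k) (fun _ => v) x
      = fun _ => (p:ℚ_[p]) ^ k / x 0 - (v:ℚ_[p]) := by
  funext j
  rw [Subsingleton.elim j 0]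
  have h0 : (0 : Fin 1) = (1 : Equiv.Perm (Fin 1))⁻¹ 0 := rfl
  simp only [LFT, if_pos h0]
  norm_num

lemma mem_invImg_iff {k : ℕ} {v : ℚ} {x : Fin 1 → ℚ_[p]} :
    x ∈ invImg p (0 : Fin 1) 1 (fun _ => (p:ℚ) ^ k) (fun _ => v) ↔
      ∃ y : ℚ_[p], Irr p y ∧ ‖y‖ ≤ (p:ℝ)⁻¹ ∧
        x = fun _ => (p:ℚ_[p]) ^ k / (y + (v:ℚ_[p])) := by
  constructor
  · rintro ⟨yv, hyv, rfl⟩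
    obtain ⟨h1, h2⟩ := mem_Dm'_one.1 hyv
    exact ⟨yv 0, h1, h2, LFTinv_one k v yv⟩
  · rintro ⟨y, h1, h2, rfl⟩
    refine ⟨fun _ => y, mem_Dm'_one.2 ⟨h1, h2⟩, ?_⟩
    rw [LFTinv_one]

lemma norm_add_Jset {n : ℕ} {v : ℚ} (hv : v ∈ Jset p n) {y : ℚ_[p]}
    (hy : ‖y‖ ≤ (p:ℝ)⁻¹) : ‖y + (v:ℚ_[p])‖ = (p:ℝ) ^ (n:ℤ) := by
  have hvn := Jset_norm (p := p) hv
  have hlt : ‖y‖ < ‖((v:ℚ_[p]))‖ := by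
    rw [hvn]
    calc ‖y‖ ≤ (p:ℝ)⁻¹ := hy
      _ < 1 := inv_lt_one_of_one_lt₀ hp_one_lt_real
      _ ≤ (p:ℝ) ^ (n:ℤ) := one_le_zpow₀ (le_of_lt hp_one_lt_real) (by positivity)
  rw [Padic.add_eq_max_of_ne (ne_of_lt hlt), max_eq_right (le_of_lt hlt), hvn]

lemma norm_div_form {k n : ℕ} {v : ℚ} (hv : v ∈ Jset p n) {y : ℚ_[p]}
    (hy : ‖y‖ ≤ (p:ℝ)⁻¹) :
    ‖(p:ℚ_[p]) ^ k / (y + (v:ℚ_[p]))‖ = (p:ℝ) ^ (-((k:ℤ) + n)) := by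
  rw [norm_div, norm_add_Jset hv hy, show ((p:ℚ_[p]) ^ k) = ((p:ℚ_[p]) ^ (k:ℤ)) from
    (zpow_natCast _ k).symm, Padic.norm_p_zpow, ← zpow_sub₀ (ne_of_gt hp_pos_real)]
  congr 1
  ring

lemma add_Jset_ne_zero {n : ℕ} {v : ℚ} (hv : v ∈ Jset p n) {y : ℚ_[p]}
    (hy : ‖y‖ ≤ (p:ℝ)⁻¹) : y + (v:ℚ_[p]) ≠ 0 := by
  intro h0
  have h1 := norm_add_Jset hv hy
  rw [h0, norm_zero] at h1
  have h2 : (0:ℝ) < (p:ℝ) ^ (n:ℤ) := zpow_pos hp_pos_real _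
  rw [← h1] at h2
  exact lt_irrefl 0 h2

lemma sysIndex_spec {ℓ : ℕ∞} {kv : ℕ × ℚ} (h : kv ∈ SysIndex p ℓ) :
    ∃ n : ℕ, kv.2 ∈ Jset p n ∧ 1 ≤ kv.1 + n ∧
      (∀ L : ℕ, ℓ = (L:ℕ∞) → (0 < kv.1 ∧ n = L) ∨ (kv.1 = 0 ∧ 1 ≤ n ∧ n ≤ L)) ∧
      (ℓ = ⊤ → kv.1 = 0 ∧ 1 ≤ n) := by
  rcases h with ⟨hk, n, hn, hvn⟩ | ⟨hk, n, h1, h2, hvn⟩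
  · refine ⟨n, hvn, by omega, fun L hL => Or.inl ⟨hk, ?_⟩, fun hT => ?_⟩
    · rw [hL] at hn; exact_mod_cast hn
    · rw [hT] at hn; exact absurd hn (by simp)
  · refine ⟨n, hvn, by omega, fun L hL => Or.inr ⟨hk, h1, ?_⟩, fun _ => ⟨hk, h1⟩⟩
    rw [hL] at h2; exact_mod_cast h2

end Helpers3

section Helpers4

open Finset

variable {p : ℕ} [Fact p.Prime]

lemma cast_p_pow (k : ℕ) : (((p:ℚ) ^ k : ℚ) : ℚ_[p]) = (p:ℚ_[p]) ^ k := by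
  push_cast; ring

lemma zpow_real_inj {a b : ℤ} (h : (p:ℝ) ^ a = (p:ℝ) ^ b) : a = b :=
  zpow_right_injective₀ hp_pos_real (ne_of_gt hp_one_lt_real) h

lemma val_of_norm {x0 : ℚ_[p]} (hx0 : x0 ≠ 0) {t : ℤ} (h : ‖x0‖ = (p:ℝ) ^ (-t)) :
    x0.valuation = t := by
  rw [Padic.norm_eq_zpow_neg_valuation hx0] at h
  have := zpow_real_inj h
  omega

lemma valuation_ge_one {x0 : ℚ_[p]} (hx0 : x0 ≠ 0) (h : ‖x0‖ ≤ (p:ℝ)⁻¹) :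
    1 ≤ x0.valuation := by
  rw [Padic.norm_eq_zpow_neg_valuation hx0] at h
  by_contra hlt
  push_neg at hlt
  have hmono : (p:ℝ) ^ (-(1:ℤ)) < (p:ℝ) ^ (-x0.valuation) :=
    zpow_lt_zpow_right₀ hp_one_lt_real (by omega)
  rw [zpow_neg_one] at hmono
  linarith

lemma norm_pow_div {x0 : ℚ_[p]} (hx0 : x0 ≠ 0) (k : ℕ) :
    ‖(p:ℚ_[p]) ^ k / x0‖ = (p:ℝ) ^ (x0.valuation - k) := by
  rw [norm_div, Padic.norm_eq_zpow_neg_valuation hx0, ← zpow_natCast (p:ℚ_[p]) k,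
    Padic.norm_p_zpow, ← zpow_sub₀ (ne_of_gt hp_pos_real)]
  congr 1
  ring

lemma exists_mem_invImg (x0 : ℚ_[p]) (hirr : Irr p x0) (k n : ℕ)
    (hα : ‖(p:ℚ_[p]) ^ k / x0‖ = (p:ℝ) ^ (n:ℤ)) :
    ∃ v ∈ Jset p n,
      (fun _ : Fin 1 => x0) ∈ invImg p (0 : Fin 1) 1 (fun _ => (p:ℚ) ^ k) (fun _ => v) := by
  have hx0 : x0 ≠ 0 := hirr.ne_zero
  set α := (p:ℚ_[p]) ^ k / x0 with hαdef
  have hαne : α ≠ 0 := div_ne_zero (pow_ne_zero _ hp_ne_zero_qp) hx0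
  obtain ⟨v, hvJ, hvnorm⟩ := exists_intpart α n hα
  have hαirr : Irr p α := by
    have := hirr.rat_div ((p:ℚ) ^ k) (pow_ne_zero _ hp_ne_zero_q)
    rwa [cast_p_pow] at this
  refine ⟨v, hvJ, mem_invImg_iff.2 ⟨α - (v:ℚ_[p]), hαirr.sub_rat v, hvnorm, ?_⟩⟩
  funext j
  have hsum : α - (v:ℚ_[p]) + (v:ℚ_[p]) = α := by ring
  rw [hsum, hαdef]
  field_simp
  rw [div_self (pow_ne_zero _ hp_ne_zero_qp)]

lemma mem_invImg_unique {ℓ : ℕ∞} {kv kv' : ℕ × ℚ} (h : kv ∈ SysIndex p ℓ)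
    (h' : kv' ∈ SysIndex p ℓ) {x : Fin 1 → ℚ_[p]}
    (hx : x ∈ invImg p (0 : Fin 1) 1 (fun _ => (p:ℚ) ^ kv.1) (fun _ => kv.2))
    (hx' : x ∈ invImg p (0 : Fin 1) 1 (fun _ => (p:ℚ) ^ kv'.1) (fun _ => kv'.2)) :
    kv = kv' := by
  obtain ⟨n, hJ, hkn, hdich, htop⟩ := sysIndex_spec h
  obtain ⟨n', hJ', hkn', hdich', htop'⟩ := sysIndex_spec h'
  obtain ⟨y, hy1, hy2, hxe⟩ := mem_invImg_iff.1 hx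
  obtain ⟨y', hy1', hy2', hxe'⟩ := mem_invImg_iff.1 hx'
  have hE : (p:ℚ_[p]) ^ kv.1 / (y + (kv.2:ℚ_[p])) = (p:ℚ_[p]) ^ kv'.1 / (y' + (kv'.2:ℚ_[p])) := by
    have h1 := congrFun hxe 0
    have h2 := congrFun hxe' 0
    rw [← h1, ← h2]
  have hnorm_eq : (p:ℝ) ^ (-((kv.1:ℤ) + n)) = (p:ℝ) ^ (-((kv'.1:ℤ) + n')) := by
    rw [← norm_div_form hJ hy2, ← norm_div_form hJ' hy2', hE]
  have hsum : (kv.1:ℤ) + n = (kv'.1:ℤ) + n' := by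
    have := zpow_real_inj hnorm_eq
    omega
  have hkk : kv.1 = kv'.1 ∧ n = n' := by
    cases ℓ using ENat.recTopCoe with
    | top =>
      obtain ⟨e1, e2⟩ := htop rfl
      obtain ⟨e3, e4⟩ := htop' rfl
      omega
    | coe L =>
      rcases hdich L rfl with ⟨e1, e2⟩ | ⟨e1, e2, e3⟩ <;>
        rcases hdich' L rfl with ⟨f1, f2⟩ | ⟨f1, f2, f3⟩ <;> omega
  obtain ⟨hk, hn⟩ := hkk
  subst hn
  have hA : y + (kv.2:ℚ_[p]) ≠ 0 := add_Jset_ne_zero hJ hy2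
  have hB : y' + (kv'.2:ℚ_[p]) ≠ 0 := add_Jset_ne_zero hJ' hy2'
  have hAB : y + (kv.2:ℚ_[p]) = y' + (kv'.2:ℚ_[p]) := by
    rw [hk] at hE
    have h2 := (div_eq_div_iff hA hB).1 hE
    exact (mul_left_cancel₀ (pow_ne_zero _ hp_ne_zero_qp) h2).symm
  have hvv : ((kv.2 - kv'.2 : ℚ) : ℚ_[p]) = y' - y := by
    push_cast
    linear_combination hAB
  have hvnorm : ‖((kv.2 - kv'.2 : ℚ) : ℚ_[p])‖ ≤ (p:ℝ)⁻¹ := by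
    rw [hvv, sub_eq_add_neg]
    calc ‖y' + (-y)‖ ≤ max ‖y'‖ ‖-y‖ := Padic.nonarchimedean _ _
      _ ≤ (p:ℝ)⁻¹ := by rw [norm_neg]; exact max_le hy2' hy2
  obtain ⟨c, hc, -, hceq⟩ := hJ
  obtain ⟨c', hc', -, hceq'⟩ := hJ'
  have hveq : kv.2 = kv'.2 := by
    rw [hceq, hceq']
    refine digits_eq hc hc' ?_
    rw [← hceq, ← hceq']
    exact hvnorm
  exact Prod.ext hk hveq

end Helpers4
end PadicCF

namespace PadicCF

open MeasureTheory Filter Topology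
open scoped ENNReal NNReal

variable (p : ℕ) [Fact p.Prime]

theorem tell_system (ℓ : ℕ∞) :
    (∀ kv ∈ SysIndex p ℓ,
      Hyperbolic p (0 : Fin 1) 1 (fun _ => (p : ℚ) ^ kv.1) fun _ => kv.2) ∧
    (∀ kv ∈ SysIndex p ℓ,
      invImg p (0 : Fin 1) 1 (fun _ => (p : ℚ) ^ kv.1) (fun _ => kv.2) ⊆ Dm' p 1) ∧
    (∀ x ∈ Dm' p 1, ∃! kv : ℕ × ℚ, kv ∈ SysIndex p ℓ ∧
      x ∈ invImg p (0 : Fin 1) 1 (fun _ => (p : ℚ) ^ kv.1) fun _ => kv.2) ∧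
    (∀ kv ∈ SysIndex p ℓ,
      ∀ x ∈ invImg p (0 : Fin 1) 1 (fun _ => (p : ℚ) ^ kv.1) fun _ => kv.2,
      (fun _ : Fin 1 => Tell p ℓ (x 0)) =
        LFT p (0 : Fin 1) 1 (fun _ => (p : ℚ) ^ kv.1) (fun _ => kv.2) x) := by

  refine ⟨?_, ?_, ?_, ?_⟩
  · -- Part 1: hyperbolicity
    rintro ⟨k, v⟩ hkv
    obtain ⟨n, hJ, hkn, -, -⟩ := sysIndex_spec hkv
    have hvne := Jset_ne_zero hJ
    have hvval := Jset_padicValRat hJ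
    have hpk : ((p:ℚ) ^ k) ≠ 0 := pow_ne_zero _ hp_ne_zero_q
    have hpkval : padicValRat p ((p:ℚ) ^ k) = k := by
      rw [show ((p:ℚ) ^ k) = ((p ^ k : ℕ) : ℚ) by push_cast; ring, padicValRat.of_nat,
        padicValNat.prime_pow]
    refine ⟨fun _ => ⟨hpk, by rw [hpkval]; positivity⟩,
      ⟨hvne, by rw [hvval]; omega, ?_⟩, ?_, ?_⟩
    · rw [padicValRat.div hpk hvne, hpkval, hvval]
      omega
    · intro j hj
      exact absurd (Subsingleton.elim j _) hj
    · intro j hj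
      exact absurd (Subsingleton.elim j _) hj
  · -- Part 2: invImg ⊆ Dm'
    rintro ⟨k, v⟩ hkv x hx
    obtain ⟨n, hJ, hkn, -, -⟩ := sysIndex_spec hkv
    obtain ⟨y, hy1, hy2, rfl⟩ := mem_invImg_iff.1 hx
    refine mem_Dm'_one.2 ⟨?_, ?_⟩
    · show Irr p ((p:ℚ_[p]) ^ k / (y + (v:ℚ_[p])))
      have h1 : Irr p (y + (v:ℚ_[p])) := hy1.add_rat v
      have h2 := h1.rat_div ((p:ℚ) ^ k) (pow_ne_zero _ hp_ne_zero_q)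
      rwa [cast_p_pow] at h2
    · show ‖(p:ℚ_[p]) ^ k / (y + (v:ℚ_[p]))‖ ≤ (p:ℝ)⁻¹
      rw [norm_div_form hJ hy2]
      calc (p:ℝ) ^ (-((k:ℤ) + n)) ≤ (p:ℝ) ^ (-(1:ℤ)) :=
            zpow_le_zpow_right₀ (le_of_lt hp_one_lt_real) (by omega)
        _ = (p:ℝ)⁻¹ := zpow_neg_one _
  · -- Part 3: existence and uniqueness
    intro x hx
    obtain ⟨hirr, hnorm⟩ := mem_Dm'_one.1 hx
    have hx0 : x 0 ≠ 0 := hirr.ne_zero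
    have hxfun : x = fun _ => x 0 := funext fun j => by rw [Subsingleton.elim j 0]
    have ht1 : 1 ≤ (x 0).valuation := valuation_ge_one hx0 hnorm
    obtain ⟨k, n, hkn, hsys⟩ : ∃ k n : ℕ, (k:ℤ) + n = (x 0).valuation ∧
        (∀ v : ℚ, v ∈ Jset p n → (k, v) ∈ SysIndex p ℓ) := by
      cases ℓ using ENat.recTopCoe with
      | top =>
        exact ⟨0, (x 0).valuation.toNat, by omega, fun v hv =>
          Or.inr ⟨rfl, (x 0).valuation.toNat, by omega, le_top, hv⟩⟩
      | coe L =>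
        by_cases hL : (x 0).valuation ≤ L
        · refine ⟨0, (x 0).valuation.toNat, by omega, fun v hv =>
            Or.inr ⟨rfl, (x 0).valuation.toNat, by omega, ?_, hv⟩⟩
          exact_mod_cast (by omega : (x 0).valuation.toNat ≤ L)
        · exact ⟨((x 0).valuation - L).toNat, L, by omega, fun v hv =>
            Or.inl ⟨by omega, L, rfl, hv⟩⟩
    have hαnorm : ‖(p:ℚ_[p]) ^ k / (x 0)‖ = (p:ℝ) ^ (n:ℤ) := by
      rw [norm_pow_div hx0]
      congr 1
      omega
    obtain ⟨v, hvJ, hmem⟩ := exists_mem_invImg (x 0) hirr k n hαnorm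
    refine ⟨(k, v), ⟨hsys v hvJ, by rw [hxfun]; exact hmem⟩, ?_⟩
    rintro ⟨k', v'⟩ ⟨hsys', hmem'⟩
    exact mem_invImg_unique hsys' (hsys v hvJ) hmem' (by rw [hxfun]; exact hmem)
  · -- Part 4: the transformation is T_ℓ
    rintro ⟨k, v⟩ hkv x hx
    obtain ⟨n, hJ, hkn, hdich, htop⟩ := sysIndex_spec hkv
    obtain ⟨y, hy1, hy2, rfl⟩ := mem_invImg_iff.1 hx
    have hyv := add_Jset_ne_zero hJ hy2
    set x0 : ℚ_[p] := (p:ℚ_[p]) ^ k / (y + (v:ℚ_[p])) with hx0def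
    have hx0 : x0 ≠ 0 := div_ne_zero (pow_ne_zero _ hp_ne_zero_qp) hyv
    have hval : x0.valuation = (k:ℤ) + n := by
      refine val_of_norm hx0 ?_
      rw [show x0 = (p:ℚ_[p]) ^ k / (y + (v:ℚ_[p])) from rfl, norm_div_form hJ hy2]
    have hkexp : kexp p ℓ x0 = (k:ℤ) := by
      cases ℓ using ENat.recTopCoe with
      | top =>
        obtain ⟨e1, -⟩ := htop rfl
        have e1' : k = 0 := e1
        simp [kexp, e1']
      | coe L =>
        have hne : (L : ℕ∞) ≠ ⊤ := by simp
        simp only [kexp, if_neg hne]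
        have huntop : WithTop.untopD 0 (L:ℕ∞) = L := rfl
        rw [huntop, hval]
        rcases hdich L rfl with ⟨e1, e2⟩ | ⟨e1, e2, e3⟩ <;> omega
    have hfloor_arg : (p:ℚ_[p]) ^ kexp p ℓ x0 / x0 = y + (v:ℚ_[p]) := by
      rw [hkexp, zpow_natCast, hx0def]
      rw [div_div_eq_mul_div, mul_comm, mul_div_assoc,
        div_self (pow_ne_zero _ hp_ne_zero_qp), mul_one]
    have hip : IsIntegralPart p (y + (v:ℚ_[p])) v := by
      obtain ⟨c, hc, -, hvsum⟩ := hJ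
      exact ⟨⟨n, c, hc, hvsum⟩, by simpa using hy2⟩
    have hfloor : padicFloor p ((p:ℚ_[p]) ^ kexp p ℓ x0 / x0) = v := by
      rw [hfloor_arg]
      exact padicFloor_eq hip
    rw [LFT_one]
    funext j
    show Tell p ℓ x0 = (p:ℚ_[p]) ^ k / x0 - (v:ℚ_[p])
    rw [Tell, if_neg hx0, hfloor, hkexp, zpow_natCast]

end PadicCF
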